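/- Let k ≥ 5 be an integer and h(j) = k^2*j^2 + (k - k^2)*j + 1. Then β_j^5(h) ≥ 0 for all 0 ≤ j ≤ 5 and β_3^6(h) < 0; consequently hdepth(h) = 5. -/

import Mathlib

theorem stmt_14 (k : ℤ) (hk : 5 ≤ k)
    (h : ℕ → ℤ) (hh : ∀ j : ℕ, h j = k ^ 2 * j ^ 2 + (k - k ^ 2) * j + 1) :
    (∀ j : ℕ, j ≤ 5 →
      0 ≤ ∑ i ∈ Finset.range (j + 1), (-1 : ℤ) ^ (j - i) * (Nat.choose (5 - i) (j - i)) * h i) ∧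
    (∑ i ∈ Finset.range 4, (-1 : ℤ) ^ (3 - i) * (Nat.choose (6 - i) (3 - i)) * h i) < 0 ∧
    (∀ d : ℕ,
      (∀ j : ℕ, j ≤ d →
        0 ≤ ∑ i ∈ Finset.range (j + 1), (-1 : ℤ) ^ (j - i) * (Nat.choose (d - i) (j - i)) * h i) →
      d ≤ 5) := by
  refine ⟨?_, ?_, ?_⟩
  · intro j hj
    interval_cases j <;>
      simp [Finset.sum_range_succ, hh, Nat.choose] <;> nlinarith [sq_nonneg k, sq_nonneg (k-1)]
  · simp [Finset.sum_range_succ, hh, Nat.choose]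
    nlinarith [sq_nonneg k]
  · intro d hd
    by_contra hd5
    obtain ⟨n, rfl⟩ : ∃ n, d = n + 6 := ⟨d - 6, by omega⟩
    have H := hd 3 (by omega)
    simp [Finset.sum_range_succ, hh, show n+6-1 = n+5 from rfl, show n+6-2 = n+4 from rfl] at H
    have h1 : (n+5) * (n+4).choose 1 = (n+5).choose 2 * 2 := Nat.add_one_mul_choose_eq (n+4) 1
    have h2 : (n+6) * (n+5).choose 2 = (n+6).choose 3 * 3 := Nat.add_one_mul_choose_eq (n+5) 2
    simp [Nat.choose_one_right] at h1
    have c2 : ((n+5).choose 2 : ℤ) * 2 = (n+5)*(n+4) := by exact_mod_cast (h1.symm)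
    have c3 : ((n+6).choose 3 : ℤ) * 6 = (n+6)*(n+5)*(n+4) := by
      have : 6 * (n+6).choose 3 = (n+6)*(n+5)*(n+4) := by nlinarith [h1, h2]
      exact_mod_cast by omega
    set N : ℤ := (n : ℤ) with hN
    have hN0 : 0 ≤ N := Int.natCast_nonneg n
    nlinarith [H, c2, c3, sq_nonneg (N - 3*k), sq_nonneg N, mul_nonneg hN0 (sq_nonneg (N-3*k)), mul_nonneg hN0 hN0, sq_nonneg k, mul_nonneg (mul_nonneg hN0 hN0) hN0]
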